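/- Let X be a complex Banach space and (a_n)_{n≥1} a sequence in X, and assume that for some x₀ > 0 and C > 0 one has ‖e^{-x₀t} ∑_{n : log n < t} n^{x₀} a_n‖ ≤ C for every t ≥ 0, where the sum runs over natural numbers n ≥ 1 with log n < t. Then for every x with 0 < x ≤ x₀ one has ‖e^{-xt} ∑_{n : log n < t} n^{x} a_n‖ ≤ C x₀ / x for every t ≥ 0. -/

import Mathlib

-- exp version of key inequality
lemma stmt17_exp_key (x x₀ u v : ℝ) (hx : 0 < x) (hxx : x ≤ x₀) (huv : u ≤ v) :
    (Real.exp (u * (x - x₀)) - Real.exp (v * (x - x₀))) * Real.exp (u * x₀)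
      ≤ (x₀ - x) / x * (Real.exp (v * x) - Real.exp (u * x)) := by
  have hE : (0:ℝ) < Real.exp (u * x) := Real.exp_pos _
  have EQ1 : Real.exp (u * (x - x₀)) * Real.exp (u * x₀) = Real.exp (u * x) := by
    rw [← Real.exp_add]; ring_nf
  have EQ2 : Real.exp (v * (x - x₀)) * Real.exp (u * x₀)
      = Real.exp (u * x) * Real.exp ((v - u) * (x - x₀)) := by
    rw [← Real.exp_add, ← Real.exp_add]; ring_nf
  have EQ3 : Real.exp (v * x) = Real.exp (u * x) * Real.exp ((v - u) * x) := by
    rw [← Real.exp_add]; ring_nf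
  rw [sub_mul, EQ1, EQ2, EQ3, div_mul_eq_mul_div, le_div_iff₀ hx]
  have hQ : 1 + (v - u) * (x - x₀) ≤ Real.exp ((v - u) * (x - x₀)) := by
    have := Real.add_one_le_exp ((v - u) * (x - x₀)); linarith
  have hP : 1 + (v - u) * x ≤ Real.exp ((v - u) * x) := by
    have := Real.add_one_le_exp ((v - u) * x); linarith
  have h1 : Real.exp (u * x) - Real.exp (u * x) * Real.exp ((v - u) * (x - x₀))
      ≤ Real.exp (u * x) * ((v - u) * (x₀ - x)) := by nlinarith
  have h2 : Real.exp (u * x) * ((v - u) * x)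
      ≤ Real.exp (u * x) * Real.exp ((v - u) * x) - Real.exp (u * x) := by nlinarith
  nlinarith [mul_le_mul_of_nonneg_right h1 hx.le,
    mul_le_mul_of_nonneg_left h2 (by linarith : (0:ℝ) ≤ x₀ - x)]

-- key pointwise inequality
lemma stmt17_key (x x₀ a b : ℝ) (hx : 0 < x) (hxx : x ≤ x₀) (ha : 1 ≤ a) (hab : a ≤ b) :
    (a ^ (x - x₀) - b ^ (x - x₀)) * a ^ x₀ ≤ (x₀ - x) / x * (b ^ x - a ^ x) := by
  have ha0 : (0:ℝ) < a := lt_of_lt_of_le one_pos ha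
  have hb0 : (0:ℝ) < b := lt_of_lt_of_le ha0 hab
  have hu : Real.log a ≤ Real.log b := Real.log_le_log ha0 hab
  rw [Real.rpow_def_of_pos ha0, Real.rpow_def_of_pos hb0, Real.rpow_def_of_pos ha0,
    Real.rpow_def_of_pos hb0, Real.rpow_def_of_pos ha0]
  exact stmt17_exp_key x x₀ (Real.log a) (Real.log b) hx hxx hu

lemma stmt17_filter_eq (t : ℝ) :
    (Finset.Icc 1 ⌊Real.exp t⌋₊).filter (fun n : ℕ => Real.log (n : ℝ) < t)
      = Finset.Icc 1 (⌈Real.exp t⌉₊ - 1) := by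
  have hc : 1 ≤ ⌈Real.exp t⌉₊ := Nat.one_le_iff_ne_zero.mpr (by
    simp [Nat.ceil_eq_zero, not_le, Real.exp_pos t])
  ext n
  simp only [Finset.mem_filter, Finset.mem_Icc]
  constructor
  · rintro ⟨⟨h1, _⟩, hlog⟩
    have hn0 : (0:ℝ) < n := by exact_mod_cast h1
    have : (n:ℝ) < Real.exp t := (Real.log_lt_iff_lt_exp hn0).mp hlog
    have := Nat.lt_ceil.mpr this
    exact ⟨h1, by omega⟩
  · rintro ⟨h1, h2⟩
    have hn : n < ⌈Real.exp t⌉₊ := by omega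
    have hlt : (n:ℝ) < Real.exp t := Nat.lt_ceil.mp hn
    have hn0 : (0:ℝ) < n := by exact_mod_cast h1
    exact ⟨⟨h1, Nat.le_floor hlt.le⟩, (Real.log_lt_iff_lt_exp hn0).mpr hlt⟩

theorem stmt_17 {X : Type*} [NormedAddCommGroup X] [NormedSpace ℂ X] [CompleteSpace X]
    (a : ℕ → X) (x₀ C : ℝ) (hx₀ : 0 < x₀) (hC : 0 < C)
    (hbound : ∀ t : ℝ, 0 ≤ t →
      ‖Real.exp (-x₀ * t) •
          ∑ n ∈ (Finset.Icc 1 ⌊Real.exp t⌋₊).filter (fun n : ℕ => Real.log (n : ℝ) < t),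
            ((n : ℝ) ^ x₀) • a n‖ ≤ C) :
    ∀ x : ℝ, 0 < x → x ≤ x₀ → ∀ t : ℝ, 0 ≤ t →
      ‖Real.exp (-x * t) •
          ∑ n ∈ (Finset.Icc 1 ⌊Real.exp t⌋₊).filter (fun n : ℕ => Real.log (n : ℝ) < t),
            ((n : ℝ) ^ x) • a n‖
        ≤ C * x₀ / x := by
  intro x hx hxx t ht
  -- Step 1: partial sums bound: ‖∑_{n=1}^m n^{x₀} • a n‖ ≤ C m^{x₀}
  have hS : ∀ m : ℕ, 1 ≤ m →
      ‖∑ n ∈ Finset.Icc 1 m, ((n : ℝ) ^ x₀) • a n‖ ≤ C * (m:ℝ) ^ x₀ := by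
    intro m hm
    have hm0 : (1:ℝ) ≤ (m:ℝ) := by exact_mod_cast hm
    have key : ∀ r : ℝ, (m:ℝ) < r → r ≤ (m:ℝ) + 1 →
        ‖∑ n ∈ Finset.Icc 1 m, ((n : ℝ) ^ x₀) • a n‖ ≤ C * r ^ x₀ := by
      intro r hr1 hr2
      have hr0 : (0:ℝ) < r := by linarith
      have hr1' : (1:ℝ) ≤ r := by linarith
      have hts : (0:ℝ) ≤ Real.log r := Real.log_nonneg hr1'
      have hb := hbound (Real.log r) hts
      have hceil : ⌈r⌉₊ = m + 1 := by
        rw [Nat.ceil_eq_iff (by omega)]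
        constructor
        · simpa using hr1
        · push_cast; exact hr2
      rw [stmt17_filter_eq, Real.exp_log hr0, hceil, Nat.add_sub_cancel] at hb
      rw [norm_smul, Real.norm_eq_abs, abs_of_pos (Real.exp_pos _)] at hb
      have hrx : r ^ x₀ = Real.exp (x₀ * Real.log r) := by
        rw [Real.rpow_def_of_pos hr0, mul_comm]
      have hexp : Real.exp (-x₀ * Real.log r) * Real.exp (x₀ * Real.log r) = 1 := by
        rw [← Real.exp_add]; ring_nf; exact Real.exp_zero
      have := mul_le_mul_of_nonneg_right hb (Real.exp_pos (x₀ * Real.log r)).le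
      rw [mul_right_comm, hexp, one_mul] at this
      rw [hrx]
      linarith
    have hT : Filter.Tendsto (fun r : ℝ => C * r ^ x₀) (nhdsWithin (m:ℝ) (Set.Ioi (m:ℝ)))
        (nhds (C * (m:ℝ) ^ x₀)) := by
      apply Filter.Tendsto.mono_left _ nhdsWithin_le_nhds
      exact (Filter.Tendsto.const_mul C
        ((Real.continuousAt_rpow_const _ _ (Or.inl (by linarith))).tendsto))
    refine ge_of_tendsto hT ?_
    filter_upwards [Ioc_mem_nhdsGT_of_mem ⟨le_refl (m:ℝ), lt_add_one _⟩] with r hr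
    exact key r hr.1 hr.2
  -- setup
  rw [stmt17_filter_eq]
  set N := ⌈Real.exp t⌉₊ - 1 with hN
  have hc1 : 1 ≤ ⌈Real.exp t⌉₊ := Nat.one_le_iff_ne_zero.mpr (by
    simp [Nat.ceil_eq_zero, not_le, Real.exp_pos t])
  have hgoal_pos : (0:ℝ) < C * x₀ / x := by positivity
  rcases Nat.eq_zero_or_pos N with hN0 | hN1
  · rw [hN0, Finset.Icc_eq_empty (by omega), Finset.sum_empty, smul_zero, norm_zero]
    exact hgoal_pos.le
  -- main case N ≥ 1
  have hNR : (1:ℝ) ≤ (N:ℝ) := by exact_mod_cast hN1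
  have hNpos : (0:ℝ) < (N:ℝ) := by linarith
  have hNlt : (N:ℝ) ≤ Real.exp t := by
    have : N < ⌈Real.exp t⌉₊ := by omega
    exact (Nat.lt_ceil.mp this).le
  have hreindex : ∀ (f : ℕ → X) (k : ℕ),
      ∑ n ∈ Finset.Icc 1 k, f n = ∑ i ∈ Finset.range k, f (i + 1) := by
    intro f k
    rw [← Finset.Ico_add_one_right_eq_Icc, Finset.sum_Ico_eq_sum_range]
    simp only [Nat.add_sub_cancel]
    exact Finset.sum_congr rfl fun i _ => by rw [Nat.add_comm]
  set F : ℕ → ℝ := fun i => ((i:ℝ) + 1) ^ (x - x₀) with hF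
  set g : ℕ → X := fun i => (((i:ℝ) + 1) ^ x₀) • a (i + 1) with hg
  have hterm : ∀ i : ℕ, (((i + 1 : ℕ):ℝ) ^ x) • a (i + 1) = F i • g i := by
    intro i
    have hpos : (0:ℝ) < (i:ℝ) + 1 := by positivity
    rw [hF, hg]
    simp only [smul_smul]
    rw [← Real.rpow_add hpos]
    push_cast
    norm_num
  have hGbound : ∀ k : ℕ, 1 ≤ k → ‖∑ i ∈ Finset.range k, g i‖ ≤ C * (k:ℝ) ^ x₀ := by
    intro k hk
    have heq : ∑ i ∈ Finset.range k, g i = ∑ n ∈ Finset.Icc 1 k, ((n:ℝ) ^ x₀) • a n := by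
      rw [hreindex (fun n => ((n:ℝ) ^ x₀) • a n) k]
      refine Finset.sum_congr rfl fun i _ => ?_
      simp only [hg]
      norm_cast
    rw [heq]; exact hS k hk
  -- rewrite the sum
  have hsum : ∑ n ∈ Finset.Icc 1 N, ((n:ℝ) ^ x) • a n = ∑ i ∈ Finset.range N, F i • g i := by
    rw [hreindex (fun n => ((n:ℝ) ^ x) • a n) N]
    exact Finset.sum_congr rfl fun i _ => hterm i
  rw [hsum, Finset.sum_range_by_parts F g N]
  -- bound the two pieces
  have hFN : F (N - 1) = (N:ℝ) ^ (x - x₀) := by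
    simp only [hF]
    congr 1
    have : ((N - 1 : ℕ):ℝ) = (N:ℝ) - 1 := by
      have := hN1; push_cast [Nat.cast_sub hN1]; ring
    rw [this]; ring
  have hpiece1 : ‖F (N - 1) • ∑ i ∈ Finset.range N, g i‖ ≤ C * (N:ℝ) ^ x := by
    rw [norm_smul, Real.norm_eq_abs, hFN,
      abs_of_nonneg (Real.rpow_nonneg hNpos.le _)]
    calc (N:ℝ) ^ (x - x₀) * ‖∑ i ∈ Finset.range N, g i‖
        ≤ (N:ℝ) ^ (x - x₀) * (C * (N:ℝ) ^ x₀) := by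
          exact mul_le_mul_of_nonneg_left (hGbound N hN1) (Real.rpow_nonneg hNpos.le _)
      _ = C * (N:ℝ) ^ x := by
          rw [mul_comm, mul_assoc, ← Real.rpow_add hNpos]
          norm_num
  have hpiece2 : ‖∑ i ∈ Finset.range (N - 1), (F (i + 1) - F i) • ∑ j ∈ Finset.range (i + 1), g j‖
      ≤ C * ((x₀ - x) / x) * ((N:ℝ) ^ x - 1) := by
    calc ‖∑ i ∈ Finset.range (N - 1), (F (i + 1) - F i) • ∑ j ∈ Finset.range (i + 1), g j‖
        ≤ ∑ i ∈ Finset.range (N - 1), ‖(F (i + 1) - F i) • ∑ j ∈ Finset.range (i + 1), g j‖ :=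
          norm_sum_le _ _
      _ ≤ ∑ i ∈ Finset.range (N - 1),
            C * ((x₀ - x) / x) * ((((i:ℝ) + 2) ^ x) - (((i:ℝ) + 1) ^ x)) := by
          refine Finset.sum_le_sum fun i _ => ?_
          rw [norm_smul, Real.norm_eq_abs]
          have hposa : (0:ℝ) < (i:ℝ) + 1 := by positivity
          have hFle : F (i + 1) ≤ F i := by
            simp only [hF]
            push_cast
            exact Real.rpow_le_rpow_of_nonpos hposa (by linarith) (by linarith)
          rw [abs_of_nonpos (by linarith), neg_sub]
          have hnorm : ‖∑ j ∈ Finset.range (i + 1), g j‖ ≤ C * ((i:ℝ) + 1) ^ x₀ := by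
            have := hGbound (i + 1) (by omega)
            push_cast at this
            exact this
          calc (F i - F (i + 1)) * ‖∑ j ∈ Finset.range (i + 1), g j‖
              ≤ (F i - F (i + 1)) * (C * ((i:ℝ) + 1) ^ x₀) :=
                mul_le_mul_of_nonneg_left hnorm (by linarith)
            _ = C * ((((i:ℝ) + 1) ^ (x - x₀) - ((i:ℝ) + 2) ^ (x - x₀)) * ((i:ℝ) + 1) ^ x₀) := by
                simp only [hF]; push_cast; ring
            _ ≤ C * ((x₀ - x) / x * ((((i:ℝ) + 2) ^ x) - (((i:ℝ) + 1) ^ x))) := by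
                refine mul_le_mul_of_nonneg_left ?_ hC.le
                exact stmt17_key x x₀ ((i:ℝ) + 1) ((i:ℝ) + 2) hx hxx (by linarith) (by linarith)
            _ = C * ((x₀ - x) / x) * ((((i:ℝ) + 2) ^ x) - (((i:ℝ) + 1) ^ x)) := by ring
      _ = C * ((x₀ - x) / x) * ((N:ℝ) ^ x - 1) := by
          rw [← Finset.mul_sum]
          congr 1
          have htel := Finset.sum_range_sub (fun m => ((m:ℝ) + 1) ^ x) (N - 1)
          have : ∀ i : ℕ, ((i:ℝ) + 2) ^ x - ((i:ℝ) + 1) ^ x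
              = ((((i+1):ℕ):ℝ) + 1) ^ x - (((i:ℕ):ℝ) + 1) ^ x := by
            intro i; push_cast; ring_nf
          rw [Finset.sum_congr rfl fun i _ => this i, htel]
          have hcast : (((N - 1 : ℕ):ℝ) + 1) = (N:ℝ) := by
            push_cast [Nat.cast_sub hN1]; ring
          rw [hcast]
          norm_num
  -- combine
  have hx_le : (N:ℝ) ^ x ≤ Real.exp (x * t) := by
    calc (N:ℝ) ^ x ≤ (Real.exp t) ^ x :=
          Real.rpow_le_rpow hNpos.le hNlt hx.le
      _ = Real.exp (x * t) := by
          rw [Real.rpow_def_of_pos (Real.exp_pos t), Real.log_exp, mul_comm]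
  have hd0 : (0:ℝ) ≤ (x₀ - x) / x := div_nonneg (by linarith) hx.le
  have h2 : 1 + (x₀ - x) / x = x₀ / x := by field_simp; ring
  have h3 : C * x₀ / x * (N:ℝ) ^ x
      = C * (N:ℝ) ^ x + C * ((x₀ - x) / x) * (N:ℝ) ^ x := by
    have : C * x₀ / x = C * (x₀ / x) := by ring
    rw [this, ← h2]; ring
  have hnorm_main : ‖F (N - 1) • ∑ i ∈ Finset.range N, g i
        - ∑ i ∈ Finset.range (N - 1), (F (i + 1) - F i) • ∑ j ∈ Finset.range (i + 1), g j‖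
      ≤ C * x₀ / x * Real.exp (x * t) := by
    have hcss : (0:ℝ) ≤ C * x₀ / x := hgoal_pos.le
    calc ‖F (N - 1) • ∑ i ∈ Finset.range N, g i
          - ∑ i ∈ Finset.range (N - 1), (F (i + 1) - F i) • ∑ j ∈ Finset.range (i + 1), g j‖
        ≤ ‖F (N - 1) • ∑ i ∈ Finset.range N, g i‖
          + ‖∑ i ∈ Finset.range (N - 1), (F (i + 1) - F i) • ∑ j ∈ Finset.range (i + 1), g j‖ :=
          norm_sub_le _ _
      _ ≤ C * (N:ℝ) ^ x + C * ((x₀ - x) / x) * ((N:ℝ) ^ x - 1) := add_le_add hpiece1 hpiece2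
      _ ≤ C * x₀ / x * (N:ℝ) ^ x := by
          rw [h3]
          have : 0 ≤ C * ((x₀ - x) / x) := mul_nonneg hC.le hd0
          nlinarith
      _ ≤ C * x₀ / x * Real.exp (x * t) := mul_le_mul_of_nonneg_left hx_le hcss
  rw [norm_smul, Real.norm_eq_abs, abs_of_pos (Real.exp_pos _)]
  have hexp1 : Real.exp (-x * t) * Real.exp (x * t) = 1 := by
    rw [← Real.exp_add]; ring_nf; exact Real.exp_zero
  calc Real.exp (-x * t) * ‖F (N - 1) • ∑ i ∈ Finset.range N, g i
        - ∑ i ∈ Finset.range (N - 1), (F (i + 1) - F i) • ∑ j ∈ Finset.range (i + 1), g j‖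
      ≤ Real.exp (-x * t) * (C * x₀ / x * Real.exp (x * t)) :=
        mul_le_mul_of_nonneg_left hnorm_main (Real.exp_pos _).le
    _ = C * x₀ / x := by
        rw [mul_comm (C * x₀ / x), ← mul_assoc, hexp1, one_mul]
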